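/- If H₁, H₂ : [p₀,0] → ℝ are both twice continuously differentiable with H_i''(p) = γ(p)·H_i'(p)³ for all p ∈ [p₀,0], H_i(p₀) = -d, H_i(0) = 0, and H_i'(p) > 0 for all p ∈ [p₀,0] (i = 1,2), then H₁ = H₂. -/

import Mathlib

open Real Set

/-- Fix p₀ < 0, d > 0, γ continuous on [p₀,0].
If H₁, H₂ are both C² solutions on [p₀,0] of H'' = γ·H'³ with H(p₀) = -d,
H(0) = 0 and H' > 0, then H₁ = H₂ on [p₀,0]. -/
theorem laminar_solution_unique
    (p₀ d : ℝ) (hp₀ : p₀ < 0) (hd : 0 < d)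
    (γ : ℝ → ℝ) (hγ : ContinuousOn γ (Icc p₀ 0))
    (H₁ H₂ : ℝ → ℝ)
    (hH₁ : ContDiffOn ℝ 2 H₁ (Icc p₀ 0)) (hH₂ : ContDiffOn ℝ 2 H₂ (Icc p₀ 0))
    (hode₁ : ∀ p ∈ Icc p₀ 0,
      derivWithin (derivWithin H₁ (Icc p₀ 0)) (Icc p₀ 0) p
        = γ p * (derivWithin H₁ (Icc p₀ 0) p) ^ 3)
    (hode₂ : ∀ p ∈ Icc p₀ 0,
      derivWithin (derivWithin H₂ (Icc p₀ 0)) (Icc p₀ 0) p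
        = γ p * (derivWithin H₂ (Icc p₀ 0) p) ^ 3)
    (hbd₁ : H₁ p₀ = -d) (hbd₂ : H₂ p₀ = -d)
    (h0₁ : H₁ 0 = 0) (h0₂ : H₂ 0 = 0)
    (hpos₁ : ∀ p ∈ Icc p₀ 0, 0 < derivWithin H₁ (Icc p₀ 0) p)
    (hpos₂ : ∀ p ∈ Icc p₀ 0, 0 < derivWithin H₂ (Icc p₀ 0) p) :
    ∀ p ∈ Icc p₀ 0, H₁ p = H₂ p := by
  have hus : UniqueDiffOn ℝ (Icc p₀ 0) := uniqueDiffOn_Icc hp₀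
  set g₁ := derivWithin H₁ (Icc p₀ 0) with hg₁def
  set g₂ := derivWithin H₂ (Icc p₀ 0) with hg₂def
  have hg₁ : ContDiffOn ℝ 1 g₁ (Icc p₀ 0) := hH₁.derivWithin hus (by norm_num)
  have hg₂ : ContDiffOn ℝ 1 g₂ (Icc p₀ 0) := hH₂.derivWithin hus (by norm_num)
  have hdg₁ : ∀ q ∈ Icc p₀ 0, HasDerivWithinAt g₁ (γ q * g₁ q ^ 3) (Icc p₀ 0) q := by
    intro q hq
    have h := ((hg₁.differentiableOn one_ne_zero) q hq).hasDerivWithinAt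
    rwa [hode₁ q hq] at h
  have hdg₂ : ∀ q ∈ Icc p₀ 0, HasDerivWithinAt g₂ (γ q * g₂ q ^ 3) (Icc p₀ 0) q := by
    intro q hq
    have h := ((hg₂.differentiableOn one_ne_zero) q hq).hasDerivWithinAt
    rwa [hode₂ q hq] at h
  -- the function ψ = g₁⁻² - g₂⁻² has zero derivative
  set ψ : ℝ → ℝ := fun x => (g₁ x ^ 2)⁻¹ - (g₂ x ^ 2)⁻¹ with hψdef
  have hψ : ∀ q ∈ Icc p₀ 0, HasDerivWithinAt ψ 0 (Icc p₀ 0) q := by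
    intro q hq
    have h1 : HasDerivWithinAt (fun x => (g₁ x ^ 2)⁻¹) (-2 * γ q) (Icc p₀ 0) q := by
      have hne : g₁ q ≠ 0 := (hpos₁ q hq).ne'
      have h : HasDerivWithinAt (fun x => (g₁ x ^ 2)⁻¹) (-(((2:ℕ):ℝ) * g₁ q ^ (2 - 1) * (γ q * g₁ q ^ 3)) / (g₁ q ^ 2) ^ 2) (Icc p₀ 0) q :=
        (((hdg₁ q hq).pow 2).inv (by simp [hne]))
      convert h using 1
      field_simp
      ring
    have h2 : HasDerivWithinAt (fun x => (g₂ x ^ 2)⁻¹) (-2 * γ q) (Icc p₀ 0) q := by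
      have hne : g₂ q ≠ 0 := (hpos₂ q hq).ne'
      have h : HasDerivWithinAt (fun x => (g₂ x ^ 2)⁻¹) (-(((2:ℕ):ℝ) * g₂ q ^ (2 - 1) * (γ q * g₂ q ^ 3)) / (g₂ q ^ 2) ^ 2) (Icc p₀ 0) q :=
        (((hdg₂ q hq).pow 2).inv (by simp [hne]))
      convert h using 1
      field_simp
      ring
    have h3 := h1.sub h2
    rwa [sub_self] at h3
  have hψconst : ∀ q ∈ Icc p₀ 0, ψ q = ψ p₀ := by
    apply constant_of_has_deriv_right_zero
    · exact fun q hq => (hψ q hq).continuousWithinAt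
    · intro x hx
      exact (hψ x (mem_Icc_of_Ico hx)).mono_of_mem_nhdsWithin (Icc_mem_nhdsGE_of_mem hx)
  -- FTC: the integral of gᵢ over [p₀,0] is d
  have hFTC : ∀ (H : ℝ → ℝ), ContDiffOn ℝ 2 H (Icc p₀ 0) → H p₀ = -d → H 0 = 0 →
      ∫ x in p₀..0, derivWithin H (Icc p₀ 0) x = d := by
    intro H hH hbd h0
    have := intervalIntegral.integral_eq_sub_of_hasDeriv_right_of_le hp₀.le hH.continuousOn
      (f' := derivWithin H (Icc p₀ 0)) ?_ ?_
    · rw [this, h0, hbd]; ring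
    · intro x hx
      have hmem : x ∈ Icc p₀ 0 := Ioo_subset_Icc_self hx
      have := ((hH.differentiableOn (by norm_num)) x hmem).hasDerivWithinAt
      exact (this.hasDerivAt (Icc_mem_nhds hx.1 hx.2)).hasDerivWithinAt
    · exact ((hH.derivWithin (m := 1) hus (by norm_num)).continuousOn).intervalIntegrable_of_Icc hp₀.le
  have hint₁ : ∫ x in p₀..0, g₁ x = d := hFTC H₁ hH₁ hbd₁ h0₁
  have hint₂ : ∫ x in p₀..0, g₂ x = d := hFTC H₂ hH₂ hbd₂ h0₂
  -- the constant must be zero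
  have h0mem : (0:ℝ) ∈ Icc p₀ 0 := ⟨hp₀.le, le_rfl⟩
  have hp₀mem : p₀ ∈ Icc p₀ 0 := ⟨le_rfl, hp₀.le⟩
  have hlt_of_ψpos : ∀ q ∈ Icc p₀ 0, 0 < ψ q → g₁ q < g₂ q := by
    intro q hq h
    have h1 := hpos₁ q hq
    have h2 := hpos₂ q hq
    have : (g₂ q ^ 2)⁻¹ < (g₁ q ^ 2)⁻¹ := by simpa [hψdef, sub_pos] using h
    have hsq : g₁ q ^ 2 < g₂ q ^ 2 := by
      have := (inv_lt_inv₀ (by positivity) (by positivity)).mp this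
      exact this
    exact lt_of_pow_lt_pow_left₀ 2 h2.le hsq
  have hψ0 : ψ p₀ = 0 := by
    by_contra hne
    rcases lt_or_gt_of_ne hne with hneg | hpos
    · -- ψ < 0 everywhere, so g₂ < g₁ everywhere, so ∫g₂ < ∫g₁
      have hlt : ∀ q ∈ Icc p₀ 0, g₂ q < g₁ q := by
        intro q hq
        have h1 := hpos₁ q hq
        have h2 := hpos₂ q hq
        have : (g₁ q ^ 2)⁻¹ < (g₂ q ^ 2)⁻¹ := by
          have := hψconst q hq
          have hh : ψ q < 0 := this ▸ hneg
          simpa [hψdef, sub_neg] using hh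
        have hsq : g₂ q ^ 2 < g₁ q ^ 2 :=
          (inv_lt_inv₀ (by positivity) (by positivity)).mp this
        exact lt_of_pow_lt_pow_left₀ 2 h1.le hsq
      have := intervalIntegral.integral_lt_integral_of_continuousOn_of_le_of_exists_lt hp₀
        hg₂.continuousOn hg₁.continuousOn
        (fun x hx => (hlt x (Ioc_subset_Icc_self hx)).le)
        ⟨0, h0mem, hlt 0 h0mem⟩
      rw [hint₁, hint₂] at this
      exact lt_irrefl d this
    · have hlt : ∀ q ∈ Icc p₀ 0, g₁ q < g₂ q := by
        intro q hq
        exact hlt_of_ψpos q hq ((hψconst q hq) ▸ hpos)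
      have := intervalIntegral.integral_lt_integral_of_continuousOn_of_le_of_exists_lt hp₀
        hg₁.continuousOn hg₂.continuousOn
        (fun x hx => (hlt x (Ioc_subset_Icc_self hx)).le)
        ⟨0, h0mem, hlt 0 h0mem⟩
      rw [hint₁, hint₂] at this
      exact lt_irrefl d this
  -- hence g₁ = g₂ on Icc
  have hgeq : ∀ q ∈ Icc p₀ 0, g₁ q = g₂ q := by
    intro q hq
    have h1 := hpos₁ q hq
    have h2 := hpos₂ q hq
    have hz : ψ q = 0 := (hψconst q hq).trans hψ0
    have : (g₁ q ^ 2)⁻¹ = (g₂ q ^ 2)⁻¹ := sub_eq_zero.mp hz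
    have hsq : g₁ q ^ 2 = g₂ q ^ 2 := inv_injective this
    have hfac : (g₁ q - g₂ q) * (g₁ q + g₂ q) = 0 := by linear_combination hsq
    rcases mul_eq_zero.mp hfac with h | h
    · linarith
    · linarith
  -- conclude H₁ = H₂
  have hdiff₁ : DifferentiableOn ℝ H₁ (Icc p₀ 0) := hH₁.differentiableOn (by norm_num)
  have hdiff₂ : DifferentiableOn ℝ H₂ (Icc p₀ 0) := hH₂.differentiableOn (by norm_num)
  exact eq_of_derivWithin_eq hdiff₁ hdiff₂
    (fun q hq => hgeq q (mem_Icc_of_Ico hq)) (by rw [hbd₁, hbd₂])
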